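/- arXiv:2002.08853 — 3 statements merged into one kernel-verified Lean document; each statement's English description precedes it below -/
import Mathlib

section
/- In the Rao–Kupper model with threshold θ > 1, each of the three functions y ↦ e^y/(e^y + θ), y ↦ (θ² - 1)e^y/((e^y + θ)(θ e^y + 1)), and y ↦ 1/(θ e^y + 1) is strictly log-concave on ℝ. -/
open Real

theorem rao_kupper_strict_log_concave (θ : ℝ) (hθ : 1 < θ) (y : ℝ) :
    iteratedDeriv 2 (fun t : ℝ => Real.log (Real.exp t / (Real.exp t + θ))) y < 0 ∧
    iteratedDeriv 2 (fun t : ℝ =>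
      Real.log ((θ ^ 2 - 1) * Real.exp t / ((Real.exp t + θ) * (θ * Real.exp t + 1)))) y < 0 ∧
    iteratedDeriv 2 (fun t : ℝ => Real.log (1 / (θ * Real.exp t + 1))) y < 0 := by
  have hθ0 : (0:ℝ) < θ := lt_trans one_pos hθ
  have hd1 : ∀ x : ℝ, (0:ℝ) < Real.exp x + θ := fun x => by positivity
  have hd2 : ∀ x : ℝ, (0:ℝ) < θ * Real.exp x + 1 := fun x => by positivity
  have hsq : (0:ℝ) < θ ^ 2 - 1 := by nlinarith
  -- derivatives of log (e^t + θ)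
  have hL1 : ∀ x : ℝ, HasDerivAt (fun t => Real.log (Real.exp t + θ))
      (Real.exp x / (Real.exp x + θ)) x := fun x =>
    ((Real.hasDerivAt_exp x).add_const θ).log (hd1 x).ne'
  have hL1' : deriv (fun t => Real.log (Real.exp t + θ))
      = fun x => Real.exp x / (Real.exp x + θ) := funext fun x => (hL1 x).deriv
  have hQ1 : ∀ x : ℝ, HasDerivAt (fun x => Real.exp x / (Real.exp x + θ))
      ((Real.exp x * (Real.exp x + θ) - Real.exp x * Real.exp x) / (Real.exp x + θ) ^ 2) x :=
    fun x => (Real.hasDerivAt_exp x).div ((Real.hasDerivAt_exp x).add_const θ) (hd1 x).ne'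
  -- derivatives of log (θ e^t + 1)
  have hL2 : ∀ x : ℝ, HasDerivAt (fun t => Real.log (θ * Real.exp t + 1))
      ((θ * Real.exp x) / (θ * Real.exp x + 1)) x := fun x =>
    (((Real.hasDerivAt_exp x).const_mul θ).add_const 1).log (hd2 x).ne'
  have hQ2 : ∀ x : ℝ, HasDerivAt (fun x => θ * Real.exp x / (θ * Real.exp x + 1))
      ((θ * Real.exp x * (θ * Real.exp x + 1) - θ * Real.exp x * (θ * Real.exp x))
        / (θ * Real.exp x + 1) ^ 2) x := fun x =>
    ((Real.hasDerivAt_exp x).const_mul θ).div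
      (((Real.hasDerivAt_exp x).const_mul θ).add_const 1) (hd2 x).ne'
  have hpos1 : (0:ℝ) < (Real.exp y * (Real.exp y + θ) - Real.exp y * Real.exp y)
      / (Real.exp y + θ) ^ 2 := by
    apply div_pos
    · have : Real.exp y * (Real.exp y + θ) - Real.exp y * Real.exp y = θ * Real.exp y := by ring
      rw [this]; positivity
    · positivity
  have hpos2 : (0:ℝ) < (θ * Real.exp y * (θ * Real.exp y + 1) - θ * Real.exp y * (θ * Real.exp y))
      / (θ * Real.exp y + 1) ^ 2 := by
    apply div_pos
    · have : θ * Real.exp y * (θ * Real.exp y + 1) - θ * Real.exp y * (θ * Real.exp y)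
        = θ * Real.exp y := by ring
      rw [this]; positivity
    · positivity
  refine ⟨?_, ?_, ?_⟩
  · have e1 : (fun t : ℝ => Real.log (Real.exp t / (Real.exp t + θ)))
        = fun t => t - Real.log (Real.exp t + θ) := funext fun t => by
      rw [Real.log_div (Real.exp_ne_zero t) (hd1 t).ne', Real.log_exp]
    rw [e1, iteratedDeriv_succ, iteratedDeriv_one]
    have hder : deriv (fun t : ℝ => t - Real.log (Real.exp t + θ))
        = fun x => 1 - Real.exp x / (Real.exp x + θ) := funext fun x =>
      ((hasDerivAt_id x).sub (hL1 x)).deriv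
    rw [hder]
    have h2 : HasDerivAt (fun x => 1 - Real.exp x / (Real.exp x + θ))
        (0 - (Real.exp y * (Real.exp y + θ) - Real.exp y * Real.exp y) / (Real.exp y + θ) ^ 2)
        y := (hasDerivAt_const y 1).sub (hQ1 y)
    rw [h2.deriv]; linarith
  · have e2 : (fun t : ℝ => Real.log ((θ ^ 2 - 1) * Real.exp t
        / ((Real.exp t + θ) * (θ * Real.exp t + 1))))
        = fun t => Real.log (θ ^ 2 - 1) + t
            - (Real.log (Real.exp t + θ) + Real.log (θ * Real.exp t + 1)) := funext fun t => by
      rw [Real.log_div (by positivity) (by positivity),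
        Real.log_mul hsq.ne' (Real.exp_ne_zero t),
        Real.log_mul (hd1 t).ne' (hd2 t).ne', Real.log_exp]
    rw [e2, iteratedDeriv_succ, iteratedDeriv_one]
    have hder : deriv (fun t : ℝ => Real.log (θ ^ 2 - 1) + t
        - (Real.log (Real.exp t + θ) + Real.log (θ * Real.exp t + 1)))
        = fun x => 0 + 1 - (Real.exp x / (Real.exp x + θ)
            + θ * Real.exp x / (θ * Real.exp x + 1)) := funext fun x =>
      (((hasDerivAt_const x (Real.log (θ ^ 2 - 1))).add (hasDerivAt_id x)).sub
        ((hL1 x).add (hL2 x))).deriv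
    rw [hder]
    have h2 : HasDerivAt (fun x => 0 + 1 - (Real.exp x / (Real.exp x + θ)
        + θ * Real.exp x / (θ * Real.exp x + 1)))
        (0 - ((Real.exp y * (Real.exp y + θ) - Real.exp y * Real.exp y) / (Real.exp y + θ) ^ 2
          + (θ * Real.exp y * (θ * Real.exp y + 1) - θ * Real.exp y * (θ * Real.exp y))
            / (θ * Real.exp y + 1) ^ 2)) y :=
      (hasDerivAt_const y (0 + 1 : ℝ)).sub ((hQ1 y).add (hQ2 y))
    rw [h2.deriv]; linarith
  · have e3 : (fun t : ℝ => Real.log (1 / (θ * Real.exp t + 1)))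
        = fun t => -Real.log (θ * Real.exp t + 1) := funext fun t => by
      rw [one_div, Real.log_inv]
    rw [e3, iteratedDeriv_succ, iteratedDeriv_one]
    have hder : deriv (fun t : ℝ => -Real.log (θ * Real.exp t + 1))
        = fun x => -(θ * Real.exp x / (θ * Real.exp x + 1)) := funext fun x => (hL2 x).neg.deriv
    rw [hder]
    have h2 : HasDerivAt (fun x => -(θ * Real.exp x / (θ * Real.exp x + 1)))
        (-((θ * Real.exp y * (θ * Real.exp y + 1) - θ * Real.exp y * (θ * Real.exp y))
          / (θ * Real.exp y + 1) ^ 2)) y := (hQ2 y).neg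
    rw [h2.deriv]; linarith
end

section
/- In Davidson's model with threshold θ > 0, each of the functions y ↦ e^y/(e^y + θe^{y/2} + 1), y ↦ θe^{y/2}/(e^y + θe^{y/2} + 1), and y ↦ 1/(e^y + θe^{y/2} + 1) is strictly log-concave on ℝ. -/
open Real

private lemma davidson_aux (θ : ℝ) (hθ : 0 < θ) (a c y : ℝ) :
    iteratedDeriv 2 (fun t : ℝ =>
      a + c * t - Real.log (Real.exp t + θ * Real.exp (t / 2) + 1)) y < 0 := by
  set D : ℝ → ℝ := fun t => Real.exp t + θ * Real.exp (t / 2) + 1 with hDdef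
  set E : ℝ → ℝ := fun t => Real.exp t + θ * (Real.exp (t / 2) * (2:ℝ)⁻¹) with hEdef
  set F : ℝ → ℝ := fun t => Real.exp t + θ * (Real.exp (t / 2) * (2:ℝ)⁻¹ * (2:ℝ)⁻¹)
    with hFdef
  have hDpos : ∀ t, 0 < D t := fun t => by positivity
  have hhalf : ∀ t : ℝ, HasDerivAt (fun s : ℝ => Real.exp (s / 2))
      (Real.exp (t / 2) * (2:ℝ)⁻¹) t := by
    intro t
    have := (Real.hasDerivAt_exp (t / 2)).comp t ((hasDerivAt_id t).div_const 2)
    simpa [div_eq_mul_inv, Function.comp_def] using this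
  have hD : ∀ t, HasDerivAt D (E t) t := by
    intro t
    exact ((Real.hasDerivAt_exp t).add ((hhalf t).const_mul θ)).add_const 1
  have hE : ∀ t, HasDerivAt E (F t) t := by
    intro t
    exact (Real.hasDerivAt_exp t).add (((hhalf t).mul_const (2:ℝ)⁻¹).const_mul θ)
  have hf : ∀ t, HasDerivAt (fun t : ℝ => a + c * t - Real.log (D t)) (c - E t / D t) t := by
    intro t
    have hl : HasDerivAt (fun t : ℝ => a + c * t) c t := by
      simpa using ((hasDerivAt_id t).const_mul c).const_add a
    exact hl.sub ((hD t).log (hDpos t).ne')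
  have hderiv1 : deriv (fun t : ℝ => a + c * t - Real.log (D t))
      = fun t => c - E t / D t := funext fun t => (hf t).deriv
  have hg : HasDerivAt (fun t => c - E t / D t)
      (-((F y * D y - E y * E y) / (D y) ^ 2)) y := by
    have := ((hE y).div (hD y) (hDpos y).ne')
    simpa using this.const_sub c
  have h2 : iteratedDeriv 2 (fun t : ℝ => a + c * t - Real.log (D t)) y
      = -((F y * D y - E y * E y) / (D y) ^ 2) := by
    rw [show (2:ℕ) = 1 + 1 from rfl, iteratedDeriv_succ, iteratedDeriv_one, hderiv1]
    exact hg.deriv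
  rw [h2]
  have hb : 0 < Real.exp (y / 2) := Real.exp_pos _
  have hab : Real.exp y = Real.exp (y / 2) * Real.exp (y / 2) := by
    rw [← Real.exp_add]; ring_nf
  have hnum : 0 < F y * D y - E y * E y := by
    simp only [hDdef, hEdef, hFdef]
    nlinarith [hb, hθ, mul_pos hθ hb, mul_pos (mul_pos hθ hb) hb]
  have hq : 0 < (F y * D y - E y * E y) / (D y) ^ 2 :=
    div_pos hnum (by positivity)
  linarith

theorem davidson_strict_log_concave (θ : ℝ) (hθ : 0 < θ) (y : ℝ) :
    iteratedDeriv 2 (fun t : ℝ =>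
      Real.log (Real.exp t / (Real.exp t + θ * Real.exp (t / 2) + 1))) y < 0 ∧
    iteratedDeriv 2 (fun t : ℝ =>
      Real.log (θ * Real.exp (t / 2) / (Real.exp t + θ * Real.exp (t / 2) + 1))) y < 0 ∧
    iteratedDeriv 2 (fun t : ℝ =>
      Real.log (1 / (Real.exp t + θ * Real.exp (t / 2) + 1))) y < 0 := by
  have hDpos : ∀ t : ℝ, (0:ℝ) < Real.exp t + θ * Real.exp (t / 2) + 1 := fun t => by
    positivity
  refine ⟨?_, ?_, ?_⟩
  · have h : (fun t : ℝ =>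
        Real.log (Real.exp t / (Real.exp t + θ * Real.exp (t / 2) + 1)))
        = fun t : ℝ => 0 + 1 * t - Real.log (Real.exp t + θ * Real.exp (t / 2) + 1) := by
      funext t
      rw [Real.log_div (Real.exp_ne_zero t) (hDpos t).ne', Real.log_exp]; ring
    rw [h]; exact davidson_aux θ hθ 0 1 y
  · have h : (fun t : ℝ =>
        Real.log (θ * Real.exp (t / 2) / (Real.exp t + θ * Real.exp (t / 2) + 1)))
        = fun t : ℝ => Real.log θ + (2:ℝ)⁻¹ * t
            - Real.log (Real.exp t + θ * Real.exp (t / 2) + 1) := by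
      funext t
      rw [Real.log_div (by positivity) (hDpos t).ne',
        Real.log_mul hθ.ne' (Real.exp_ne_zero _), Real.log_exp]; ring
    rw [h]; exact davidson_aux θ hθ (Real.log θ) (2:ℝ)⁻¹ y
  · have h : (fun t : ℝ =>
        Real.log (1 / (Real.exp t + θ * Real.exp (t / 2) + 1)))
        = fun t : ℝ => 0 + 0 * t - Real.log (Real.exp t + θ * Real.exp (t / 2) + 1) := by
      funext t
      rw [Real.log_div one_ne_zero (hDpos t).ne', Real.log_one]; ring
    rw [h]; exact davidson_aux θ hθ 0 0 y
end

section
/- Suppose c_n ∈ [1/2, 1) and p_n ∈ (0,1] satisfy (log n)/(n p_n |log c_n|) → 0 as n → ∞. Then n·((1 + c_n^{(T/4) n p_n})^n - 1) → 0 as n → ∞, for any fixed constant T ≥ 1. -/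
open Filter Real

private lemma exp_sub_one_le (y : ℝ) : Real.exp y - 1 ≤ y * Real.exp y := by
  have h := Real.add_one_le_exp (-y)
  have h2 : Real.exp (-y) * Real.exp y = 1 := by rw [← Real.exp_add]; simp
  nlinarith [Real.exp_pos y]

theorem sparsity_condition_implies_vanishing (T : ℝ) (hT : 1 ≤ T)
    (c p : ℕ → ℝ)
    (hc : ∀ n, c n ∈ Set.Ico (1 / 2 : ℝ) 1)
    (hp : ∀ n, p n ∈ Set.Ioc (0 : ℝ) 1)
    (hlim : Tendsto (fun n : ℕ =>
        Real.log n / ((n : ℝ) * p n * |Real.log (c n)|)) atTop (nhds 0)) :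
    Tendsto (fun n : ℕ =>
        (n : ℝ) * ((1 + (c n) ^ ((T / 4) * n * p n)) ^ n - 1)) atTop (nhds 0) := by
  set a : ℕ → ℝ := fun n => (T / 4) * n * p n * |Real.log (c n)| with ha
  have hc0 : ∀ n, 0 < c n := fun n => lt_of_lt_of_le (by norm_num) (hc n).1
  have hclog : ∀ n, Real.log (c n) < 0 := fun n => Real.log_neg (hc0 n) (hc n).2
  have ha0 : ∀ n, 0 ≤ a n := by
    intro n
    have := (hp n).1
    have : (0:ℝ) ≤ (T/4) * n * p n := by positivity
    positivity
  have hx : ∀ n, (c n) ^ ((T / 4) * (n:ℝ) * p n) = Real.exp (-(a n)) := by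
    intro n
    rw [Real.rpow_def_of_pos (hc0 n)]
    congr 1
    show Real.log (c n) * ((T / 4) * (n:ℝ) * p n) = -((T / 4) * (n:ℝ) * p n * |Real.log (c n)|)
    rw [abs_of_nonpos (hclog n).le]
    ring
  -- key limit: k * log n - a n → -∞ for any k
  have key : ∀ k : ℝ, Tendsto (fun n : ℕ => k * Real.log n - a n) atTop atBot := by
    intro k
    have hε : (0:ℝ) < 1 / (4 * (|k| + 2)) := by positivity
    have hev : ∀ᶠ n : ℕ in atTop,
        Real.log n / ((n : ℝ) * p n * |Real.log (c n)|) < 1 / (4 * (|k| + 2)) := by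
      have := hlim.eventually (eventually_lt_nhds hε)
      simpa using this
    refine tendsto_atBot_mono' atTop (f₁ := fun n : ℕ => -Real.log n) ?_ ?_
    · filter_upwards [hev, eventually_ge_atTop 1] with n hn hn1
      have hn1' : (1:ℝ) ≤ (n:ℝ) := by exact_mod_cast hn1
      have hlogn : 0 ≤ Real.log n := Real.log_nonneg hn1'
      have hD : 0 < (n : ℝ) * p n * |Real.log (c n)| := by
        have h1 : (0:ℝ) < n := by linarith
        have h2 := (hp n).1
        have h3 : 0 < |Real.log (c n)| := abs_pos.mpr (hclog n).ne
        positivity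
      have hD2 : Real.log n ≤ (1 / (4 * (|k| + 2))) * ((n : ℝ) * p n * |Real.log (c n)|) := by
        rw [div_lt_iff₀ hD] at hn
        linarith
      have hTD : (|k| + 2) * Real.log n ≤ a n := by
        have h4 : 4 * (|k| + 2) * Real.log n ≤ (n : ℝ) * p n * |Real.log (c n)| := by
          have hpos : (0:ℝ) < 4 * (|k| + 2) := by positivity
          rw [div_mul_eq_mul_div, le_div_iff₀ hpos] at hD2
          linarith
        have hT4 : (1:ℝ)/4 ≤ T/4 := by linarith
        have : (1/4) * ((n : ℝ) * p n * |Real.log (c n)|) ≤ a n := by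
          rw [ha]
          have := hD.le
          nlinarith
        nlinarith
      have hk : k ≤ |k| := le_abs_self k
      nlinarith
    · exact tendsto_neg_atBot_iff.mpr (Real.tendsto_log_atTop.comp tendsto_natCast_atTop_atTop)
  -- squeeze
  have hg : Tendsto (fun n : ℕ =>
      Real.exp (2 * Real.log n - a n) * Real.exp (Real.exp (Real.log n - a n)))
      atTop (nhds 0) := by
    have h1 : Tendsto (fun n : ℕ => Real.exp (2 * Real.log n - a n)) atTop (nhds 0) :=
      Real.tendsto_exp_atBot.comp (key 2)
    have h2 : Tendsto (fun n : ℕ => Real.exp (Real.exp (Real.log n - a n))) atTop (nhds 1) := by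
      have := Real.tendsto_exp_atBot.comp (key 1)
      have h3 := (Real.continuous_exp.tendsto 0).comp this
      simpa [Function.comp_def] using h3
    simpa using h1.mul h2
  apply squeeze_zero' (g := fun n : ℕ =>
      Real.exp (2 * Real.log n - a n) * Real.exp (Real.exp (Real.log n - a n))) _ _ hg
  · filter_upwards with n
    have hx0 : 0 ≤ (c n) ^ ((T / 4) * (n:ℝ) * p n) := Real.rpow_nonneg (hc0 n).le _
    have h1 : (1:ℝ) ≤ (1 + (c n) ^ ((T / 4) * (n:ℝ) * p n)) ^ n :=
      one_le_pow₀ (by linarith)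
    have : (0:ℝ) ≤ (n:ℝ) := Nat.cast_nonneg n
    nlinarith
  · filter_upwards [eventually_ge_atTop 1] with n hn1
    have hn1' : (1:ℝ) ≤ (n:ℝ) := by exact_mod_cast hn1
    have hnpos : (0:ℝ) < n := by linarith
    set x := (c n) ^ ((T / 4) * (n:ℝ) * p n) with hxdef
    have hx0 : 0 ≤ x := Real.rpow_nonneg (hc0 n).le _
    have hxe : x = Real.exp (-(a n)) := hx n
    -- (1+x)^n ≤ exp(n x)
    have h1 : (1 + x) ^ n ≤ Real.exp ((n:ℝ) * x) := by
      have : (1 + x) ≤ Real.exp x := by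
        have := Real.add_one_le_exp x
        linarith
      calc (1 + x) ^ n ≤ (Real.exp x) ^ n := pow_le_pow_left₀ (by linarith) this n
        _ = Real.exp ((n:ℝ) * x) := by rw [← Real.exp_nat_mul]
    have hnx0 : 0 ≤ (n:ℝ) * x := by positivity
    have h2 : Real.exp ((n:ℝ) * x) - 1 ≤ ((n:ℝ) * x) * Real.exp ((n:ℝ) * x) :=
      exp_sub_one_le _
    have hnx : (n:ℝ) * x = Real.exp (Real.log n - a n) := by
      rw [hxe, Real.exp_sub, Real.exp_log hnpos, Real.exp_neg, div_eq_mul_inv, ← Real.exp_neg]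
    have hn2x : (n:ℝ) * ((n:ℝ) * x) = Real.exp (2 * Real.log n - a n) := by
      have : (2:ℝ) * Real.log n - a n = Real.log n + (Real.log n - a n) := by ring
      rw [this, Real.exp_add, Real.exp_log hnpos, hnx]
    calc (n:ℝ) * ((1 + x) ^ n - 1)
        ≤ (n:ℝ) * (Real.exp ((n:ℝ) * x) - 1) := by
          apply mul_le_mul_of_nonneg_left (by linarith) hnpos.le
      _ ≤ (n:ℝ) * (((n:ℝ) * x) * Real.exp ((n:ℝ) * x)) :=
          mul_le_mul_of_nonneg_left h2 hnpos.le
      _ = Real.exp (2 * Real.log n - a n) * Real.exp (Real.exp (Real.log n - a n)) := by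
          rw [← hn2x]; rw [hnx]; ring
end
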